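/- For ℓ ∈ {exp, logistic} and v ∈ ℝⁿ with all coordinates v_i < 0, define the perspective g(r) := r·ℓ^{-1}(∑_{i=1}^n ℓ(v_i/r)) for r > 0. Then g is nondecreasing in r and lim_{r→0⁺} g(r) = max_i v_i. -/

import Mathlib

open Finset Filter Real Set

lemma sum_rpow_le_rpow_sum' {ι : Type*} (s : Finset ι) (a : ι → ℝ)
    (ha : ∀ i ∈ s, 0 ≤ a i) {t : ℝ} (ht : 1 ≤ t) :
    ∑ i ∈ s, a i ^ t ≤ (∑ i ∈ s, a i) ^ t := by
  have hS : 0 ≤ ∑ i ∈ s, a i := Finset.sum_nonneg ha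
  have ht0 : t ≠ 0 := by linarith
  have key : ∀ i ∈ s, a i ^ t ≤ a i * (∑ j ∈ s, a j) ^ (t - 1) := by
    intro i hi
    have h1 : a i ^ t = a i ^ (1:ℝ) * a i ^ (t - 1) := by
      rw [← Real.rpow_add' (ha i hi) (by simpa using ht0)]
      ring_nf
    rw [h1, Real.rpow_one]
    apply mul_le_mul_of_nonneg_left _ (ha i hi)
    exact Real.rpow_le_rpow (ha i hi) (Finset.single_le_sum ha hi) (by linarith)
  calc ∑ i ∈ s, a i ^ t ≤ ∑ i ∈ s, a i * (∑ j ∈ s, a j) ^ (t - 1) :=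
        Finset.sum_le_sum key
    _ = (∑ i ∈ s, a i) ^ (1:ℝ) * (∑ j ∈ s, a j) ^ (t - 1) := by
        rw [← Finset.sum_mul, Real.rpow_one]
    _ = (∑ i ∈ s, a i) ^ t := by
        rw [← Real.rpow_add' hS (by simpa using ht0)]; ring_nf

lemma lse_mono_tendsto {ι : Type*} (s : Finset ι) (hs : s.Nonempty) (w : ι → ℝ) :
    MonotoneOn (fun r => r * Real.log (∑ i ∈ s, Real.exp (w i / r))) (Set.Ioi 0) ∧
    Filter.Tendsto (fun r => r * Real.log (∑ i ∈ s, Real.exp (w i / r)))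
      (nhdsWithin 0 (Set.Ioi 0)) (nhds (s.sup' hs w)) := by
  have hpos : ∀ r : ℝ, 0 < ∑ i ∈ s, Real.exp (w i / r) := fun r =>
    Finset.sum_pos (fun i _ => Real.exp_pos _) hs
  constructor
  · -- monotone
    intro a ha b hb hab
    simp only [Set.mem_Ioi] at ha hb
    set t : ℝ := b / a with htdef
    have ht : 1 ≤ t := (one_le_div ha).2 hab
    have hkey : ∀ i ∈ s, Real.exp (w i / a) = Real.exp (w i / b) ^ t := by
      intro i _
      rw [Real.rpow_def_of_pos (Real.exp_pos _), Real.log_exp]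
      congr 1
      rw [htdef]
      field_simp
    have h1 : (∑ i ∈ s, Real.exp (w i / a)) ≤ (∑ i ∈ s, Real.exp (w i / b)) ^ t := by
      rw [Finset.sum_congr rfl hkey]
      exact sum_rpow_le_rpow_sum' s _ (fun i _ => (Real.exp_pos _).le) ht
    have h2 : Real.log (∑ i ∈ s, Real.exp (w i / a)) ≤ t * Real.log (∑ i ∈ s, Real.exp (w i / b)) := by
      rw [← Real.log_rpow (hpos b)]
      exact Real.log_le_log (hpos a) h1
    calc a * Real.log (∑ i ∈ s, Real.exp (w i / a))
        ≤ a * (t * Real.log (∑ i ∈ s, Real.exp (w i / b))) :=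
          mul_le_mul_of_nonneg_left h2 ha.le
      _ = b * Real.log (∑ i ∈ s, Real.exp (w i / b)) := by
          rw [htdef]; field_simp
  · -- limit
    set M := s.sup' hs w with hM
    obtain ⟨i0, hi0, hwi0⟩ := Finset.exists_mem_eq_sup' hs w
    have hlow : ∀ r ∈ Set.Ioi (0:ℝ), M ≤ r * Real.log (∑ i ∈ s, Real.exp (w i / r)) := by
      intro r hr
      simp only [Set.mem_Ioi] at hr
      rw [← hM] at hwi0
      have h1 : Real.exp (M / r) ≤ ∑ i ∈ s, Real.exp (w i / r) := by
        have := Finset.single_le_sum (f := fun i => Real.exp (w i / r))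
          (fun i _ => (Real.exp_pos _).le) hi0
        rw [← hwi0] at this
        exact this
      have h2 : M / r ≤ Real.log (∑ i ∈ s, Real.exp (w i / r)) :=
        (Real.le_log_iff_exp_le (hpos r)).2 h1
      calc M = r * (M / r) := by field_simp
        _ ≤ r * Real.log (∑ i ∈ s, Real.exp (w i / r)) :=
            mul_le_mul_of_nonneg_left h2 hr.le
    have hup : ∀ r ∈ Set.Ioi (0:ℝ),
        r * Real.log (∑ i ∈ s, Real.exp (w i / r)) ≤ r * Real.log (s.card) + M := by
      intro r hr
      simp only [Set.mem_Ioi] at hr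
      have h1 : (∑ i ∈ s, Real.exp (w i / r)) ≤ s.card * Real.exp (M / r) := by
        calc (∑ i ∈ s, Real.exp (w i / r)) ≤ ∑ _i ∈ s, Real.exp (M / r) := by
              apply Finset.sum_le_sum
              intro i hi
              have hwiM : w i ≤ M := Finset.le_sup' w hi
              exact Real.exp_le_exp.2 (by gcongr)
          _ = s.card * Real.exp (M / r) := by rw [Finset.sum_const, nsmul_eq_mul]
      have h2 : Real.log (∑ i ∈ s, Real.exp (w i / r)) ≤ Real.log (s.card) + M / r := by
        calc Real.log (∑ i ∈ s, Real.exp (w i / r))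
            ≤ Real.log (s.card * Real.exp (M / r)) := Real.log_le_log (hpos r) h1
          _ = Real.log (s.card) + M / r := by
              rw [Real.log_mul (by positivity) (Real.exp_ne_zero _), Real.log_exp]
      calc r * Real.log (∑ i ∈ s, Real.exp (w i / r))
          ≤ r * (Real.log (s.card) + M / r) := mul_le_mul_of_nonneg_left h2 hr.le
        _ = r * Real.log (s.card) + M := by field_simp
    have hupt : Filter.Tendsto (fun r : ℝ => r * Real.log (s.card) + M)
        (nhdsWithin 0 (Set.Ioi 0)) (nhds M) := by
      have : Filter.Tendsto (fun r : ℝ => r * Real.log (s.card) + M)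
          (nhds 0) (nhds (0 * Real.log (s.card) + M)) := by
        exact ((continuous_id.mul continuous_const).add continuous_const).tendsto 0
      simpa using this.mono_left nhdsWithin_le_nhds
    refine tendsto_of_tendsto_of_tendsto_of_le_of_le' tendsto_const_nhds hupt ?_ ?_
    · exact eventually_nhdsWithin_of_forall hlow
    · exact eventually_nhdsWithin_of_forall hup


/-- For the exponential and logistic losses, with all `vᵢ < 0`, the perspective
`g(r) = r·ℓ⁻¹(∑ᵢ ℓ(vᵢ/r))` is nondecreasing on `(0,∞)` and tends to `maxᵢ vᵢ`
as `r → 0⁺`. -/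
theorem stmt_16 {n : ℕ} [NeZero n] (v : Fin n → ℝ) (hv : ∀ i, v i < 0) :
    let gexp : ℝ → ℝ := fun r => r * Real.log (∑ i, Real.exp (v i / r))
    let glog : ℝ → ℝ := fun r =>
      r * Real.log (Real.exp (∑ i, Real.log (1 + Real.exp (v i / r))) - 1)
    let M : ℝ := Finset.univ.sup' Finset.univ_nonempty v
    (MonotoneOn gexp (Set.Ioi 0) ∧
      Filter.Tendsto gexp (nhdsWithin 0 (Set.Ioi 0)) (nhds M)) ∧
    (MonotoneOn glog (Set.Ioi 0) ∧
      Filter.Tendsto glog (nhdsWithin 0 (Set.Ioi 0)) (nhds M)) := by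
  intro gexp glog M
  obtain ⟨hexp_mono, hexp_tendsto⟩ := lse_mono_tendsto Finset.univ Finset.univ_nonempty v
  refine ⟨⟨hexp_mono, hexp_tendsto⟩, ?_⟩
  -- logistic part
  set S : Finset (Finset (Fin n)) := (Finset.univ : Finset (Fin n)).powerset.erase ∅ with hSdef
  set W : Finset (Fin n) → ℝ := fun t => ∑ i ∈ t, v i with hWdef
  have hi0 : Nonempty (Fin n) := ⟨⟨0, Nat.pos_of_ne_zero (NeZero.ne n)⟩⟩
  obtain ⟨j⟩ := hi0
  have hjS : ({j} : Finset (Fin n)) ∈ S := by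
    rw [hSdef, Finset.mem_erase]
    exact ⟨Finset.singleton_ne_empty j, Finset.mem_powerset.2 (Finset.subset_univ _)⟩
  have hS : S.Nonempty := ⟨{j}, hjS⟩
  -- the sup over nonempty subsets equals M
  have hsup : S.sup' hS W = M := by
    apply le_antisymm
    · apply Finset.sup'_le
      intro t ht
      rw [hSdef, Finset.mem_erase] at ht
      obtain ⟨i, hi⟩ := Finset.nonempty_iff_ne_empty.2 ht.1
      have h1 : W t = v i + ∑ k ∈ t.erase i, v k := by
        rw [hWdef]
        exact (Finset.add_sum_erase t v hi).symm
      have h2 : ∑ k ∈ t.erase i, v k ≤ 0 :=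
        Finset.sum_nonpos fun k _ => (hv k).le
      have h3 : v i ≤ M := Finset.le_sup' v (Finset.mem_univ i)
      rw [h1]; linarith
    · obtain ⟨i, _, hiM⟩ := Finset.exists_mem_eq_sup' Finset.univ_nonempty v
      have hiS : ({i} : Finset (Fin n)) ∈ S := by
        rw [hSdef, Finset.mem_erase]
        exact ⟨Finset.singleton_ne_empty i, Finset.mem_powerset.2 (Finset.subset_univ _)⟩
      have : W {i} = v i := by simp [hWdef]
      calc M = W {i} := by rw [this]; exact hiM
        _ ≤ S.sup' hS W := Finset.le_sup' W hiS
  -- glog agrees with the lse form on Ioi 0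
  have heq : ∀ r : ℝ, glog r = r * Real.log (∑ t ∈ S, Real.exp (W t / r)) := by
    intro r
    have hprod : Real.exp (∑ i, Real.log (1 + Real.exp (v i / r)))
        = ∏ i, (1 + Real.exp (v i / r)) := by
      rw [Real.exp_sum]
      exact Finset.prod_congr rfl fun i _ =>
        Real.exp_log (by positivity)
    have hexpand : ∏ i, (1 + Real.exp (v i / r))
        = ∑ t ∈ (Finset.univ : Finset (Fin n)).powerset, Real.exp (W t / r) := by
      have : ∀ i ∈ (Finset.univ : Finset (Fin n)),
          (1 : ℝ) + Real.exp (v i / r) = Real.exp (v i / r) + 1 := fun i _ => add_comm _ _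
      rw [Finset.prod_congr rfl this, Finset.prod_add]
      apply Finset.sum_congr rfl
      intro t _
      rw [Finset.prod_const_one, mul_one, ← Real.exp_sum]
      congr 1
      rw [hWdef]
      simp [Finset.sum_div]
    have hsplit : ∑ t ∈ (Finset.univ : Finset (Fin n)).powerset, Real.exp (W t / r)
        = 1 + ∑ t ∈ S, Real.exp (W t / r) := by
      have hmem : (∅ : Finset (Fin n)) ∈ (Finset.univ : Finset (Fin n)).powerset :=
        Finset.mem_powerset.2 (Finset.empty_subset _)
      rw [hSdef, ← Finset.add_sum_erase _ _ hmem]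
      congr 1
      simp [hWdef]
    show r * Real.log (Real.exp (∑ i, Real.log (1 + Real.exp (v i / r))) - 1) = _
    rw [hprod, hexpand, hsplit]
    congr 2
    ring
  obtain ⟨hlog_mono, hlog_tendsto⟩ := lse_mono_tendsto S hS W
  constructor
  · intro a ha b hb hab
    rw [heq a, heq b]
    exact hlog_mono ha hb hab
  · rw [← hsup]
    exact Filter.Tendsto.congr (fun r => (heq r).symm) hlog_tendsto
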